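/- arXiv:2303.15635 — 2 statements merged into one kernel-verified Lean document; each statement's English description precedes it below -/
import Mathlib

section
/- Let k_i ≥ 3 for all i, κ = Σ(k_i - 1), and let G = S_{n,κ}^+ be the graph obtained from K_κ ∨ (n-κ)K_1 by adding one edge inside the independent set. Then G contains no subgraph isomorphic to C_{2k_1,...,2k_t}. Moreover, any minor of S_{n,κ}^+ is isomorphic to a subgraph of S_{n,κ}^+, so S_{n,κ}^+ is C_{2k_1,...,2k_t}-minor-free. -/
/-- The intersecting even cycle `C_{2k₁,…,2k_t}`. -/
def interCycles (t : ℕ) (k : Fin t → ℕ) :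
    SimpleGraph (Option (Σ i : Fin t, Fin (2 * k i - 1))) :=
  SimpleGraph.fromRel (fun x y =>
    match x, y with
    | none, some ⟨i, j⟩ => (j : ℕ) = 0 ∨ (j : ℕ) = 2 * k i - 2
    | some ⟨i, j⟩, some ⟨i', j'⟩ => i = i' ∧ (j : ℕ) + 1 = (j' : ℕ)
    | _, _ => False)

/-- `H` occurs as a subgraph of `G`. -/
def ContainsCopy {α β : Type*} (H : SimpleGraph α) (G : SimpleGraph β) : Prop :=
  ∃ f : α ↪ β, ∀ a b, H.Adj a b → G.Adj (f a) (f b)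

/-- `H` is a minor of `G`: there is a family of nonempty, pairwise disjoint,
connected branch sets in `G` indexed by the vertices of `H`, with an edge of
`G` between the branch sets of any two adjacent vertices of `H`. -/
def IsMinorOf {α β : Type*} (H : SimpleGraph α) (G : SimpleGraph β) : Prop :=
  ∃ B : α → Set β,
    (∀ a, (B a).Nonempty) ∧
    (∀ a, (G.induce (B a)).Connected) ∧
    (Pairwise fun a a' => Disjoint (B a) (B a')) ∧
    ∀ a a', H.Adj a a' → ∃ x ∈ B a, ∃ y ∈ B a', G.Adj x y

/-- `S_{n,κ}⁺`: the join `K_κ ∨ (n-κ)K₁` together with one extra edge (between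
the vertices `κ` and `κ+1`) inside the independent set. -/
def Splus (n κ : ℕ) : SimpleGraph (Fin n) :=
  SimpleGraph.fromRel (fun a b =>
    (a : ℕ) < κ ∨ (b : ℕ) < κ ∨ ((a : ℕ) = κ ∧ (b : ℕ) = κ + 1))

lemma splus_adj_iff {n κ : ℕ} {u v : Fin n} :
    (Splus n κ).Adj u v ↔ u ≠ v ∧ ((u:ℕ) < κ ∨ (v:ℕ) < κ ∨
      ((u:ℕ) = κ ∧ (v:ℕ) = κ + 1) ∨ ((v:ℕ) = κ ∧ (u:ℕ) = κ + 1)) := by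
  rw [Splus, SimpleGraph.fromRel_adj]; tauto

lemma ic_adj_none {t : ℕ} {k : Fin t → ℕ} {i : Fin t} {j : Fin (2 * k i - 1)}
    (h : (j:ℕ) = 0 ∨ (j:ℕ) = 2 * k i - 2) :
    (interCycles t k).Adj none (some ⟨i, j⟩) := by
  rw [interCycles, SimpleGraph.fromRel_adj]
  exact ⟨by simp, Or.inl h⟩

lemma ic_adj_some {t : ℕ} {k : Fin t → ℕ} {i : Fin t} {j j' : Fin (2 * k i - 1)}
    (h : (j:ℕ) + 1 = (j':ℕ)) :
    (interCycles t k).Adj (some ⟨i, j⟩) (some ⟨i, j'⟩) := by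
  rw [interCycles, SimpleGraph.fromRel_adj]
  refine ⟨?_, Or.inl ⟨rfl, h⟩⟩
  intro he
  have hv : (j:ℕ) = (j':ℕ) := by
    have := Option.some_injective _ he
    simpa using congrArg (fun s : (Σ i : Fin t, Fin (2 * k i - 1)) => (s.2 : ℕ)) this
  omega

lemma hub_card {n κ : ℕ} (h : κ < n) :
    (Finset.univ.filter (fun v : Fin n => (v:ℕ) < κ)).card = κ := by
  have he : (Finset.univ.filter (fun v : Fin n => (v:ℕ) < κ)) =
      Finset.Iio (⟨κ, h⟩ : Fin n) := by
    ext v; simp [Fin.lt_def]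
  rw [he, Fin.card_Iio]

lemma connected_nohub {n κ : ℕ} {s : Set (Fin n)}
    (hconn : ((Splus n κ).induce s).Connected)
    (hnohub : ∀ v ∈ s, κ ≤ (v:ℕ)) {x y : Fin n} (hx : x ∈ s) (hy : y ∈ s)
    (hxy : x ≠ y) : (x:ℕ) = κ ∨ (x:ℕ) = κ + 1 := by
  obtain ⟨w⟩ := hconn.preconnected ⟨x, hx⟩ ⟨y, hy⟩
  cases w with
  | nil => exact absurd rfl hxy
  | cons h p =>
    rename_i b
    have hadj : (Splus n κ).Adj x (b : Fin n) := by
      simpa using h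
    rw [splus_adj_iff] at hadj
    have := hnohub _ hx
    have := hnohub _ b.2
    omega

lemma minor_to_copy {κ n : ℕ} {α : Type} {H : SimpleGraph α}
    (hm : IsMinorOf H (Splus n κ)) : ContainsCopy H (Splus n κ) := by
  classical
  obtain ⟨B, hne, hconn, hdisj, hedge⟩ := hm
  set r : α → Fin n := fun a =>
    if h : ∃ v ∈ B a, (v:ℕ) < κ then h.choose else (hne a).choose with hr
  have hrmem : ∀ a, r a ∈ B a := by
    intro a
    by_cases h : ∃ v ∈ B a, (v:ℕ) < κ
    · simp only [hr, dif_pos h]; exact h.choose_spec.1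
    · simp only [hr, dif_neg h]; exact (hne a).choose_spec
  have hrhub : ∀ a, (∃ v ∈ B a, (v:ℕ) < κ) → (r a : ℕ) < κ := by
    intro a h
    simp only [hr, dif_pos h]; exact h.choose_spec.2
  have rinj : Function.Injective r := by
    intro a a' h
    by_contra hne'
    exact (Set.disjoint_left.mp (hdisj hne') (hrmem a)) (h ▸ hrmem a')
  refine ⟨⟨r, rinj⟩, ?_⟩
  intro a a' hadj
  simp only [Function.Embedding.coeFn_mk]
  have hraa : r a ≠ r a' := fun h => hadj.ne (rinj h)
  refine splus_adj_iff.mpr ⟨hraa, ?_⟩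
  by_cases ha : ∃ v ∈ B a, (v:ℕ) < κ
  · exact Or.inl (hrhub a ha)
  by_cases ha' : ∃ v ∈ B a', (v:ℕ) < κ
  · exact Or.inr (Or.inl (hrhub a' ha'))
  push_neg at ha ha'
  obtain ⟨x, hxB, y, hyB, hxy⟩ := hedge a a' hadj
  rw [splus_adj_iff] at hxy
  obtain ⟨hxyne, hc⟩ := hxy
  have hxk : κ ≤ (x:ℕ) := ha x hxB
  have hyk : κ ≤ (y:ℕ) := ha' y hyB
  have hc' : ((x:ℕ) = κ ∧ (y:ℕ) = κ + 1) ∨ ((y:ℕ) = κ ∧ (x:ℕ) = κ + 1) := by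
    rcases hc with h | h | h | h <;> first | omega | exact Or.inl h | exact Or.inr h
  have hBa : ∀ z ∈ B a, z = x := by
    intro z hz
    by_contra hzx
    have hzv := connected_nohub (hconn a) ha hz hxB hzx
    have hzy : z = y := by
      apply Fin.ext
      have : (z:ℕ) ≠ (x:ℕ) := fun h => hzx (Fin.ext h)
      omega
    exact (Set.disjoint_left.mp (hdisj hadj.ne) hz) (hzy ▸ hyB)
  have hBa' : ∀ z ∈ B a', z = y := by
    intro z hz
    by_contra hzy
    have hzv := connected_nohub (hconn a') ha' hz hyB hzy
    have hzx : z = x := by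
      apply Fin.ext
      have : (z:ℕ) ≠ (y:ℕ) := fun h => hzy (Fin.ext h)
      omega
    exact (Set.disjoint_right.mp (hdisj hadj.ne) hz) (hzx ▸ hxB)
  have h1 : r a = x := hBa _ (hrmem a)
  have h2 : r a' = y := hBa' _ (hrmem a')
  rw [h1, h2]
  tauto

lemma cycle_hubs {t : ℕ} {k : Fin t → ℕ} {κ n : ℕ} (hn : κ + 2 ≤ n)
    (f : Option (Σ i : Fin t, Fin (2 * k i - 1)) ↪ Fin n)
    (hf : ∀ a b, (interCycles t k).Adj a b → (Splus n κ).Adj (f a) (f b))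
    (i : Fin t) (hki : 3 ≤ k i) :
    ∃ V : Finset (Fin n), k i ≤ V.card ∧ (∀ v ∈ V, (v:ℕ) < κ) ∧
      ∀ v ∈ V, v = f none ∨ ∃ j, v = f (some ⟨i, j⟩) := by
  classical
  set K := k i with hK
  set M := 2 * K with hM
  haveI : NeZero M := ⟨by omega⟩
  haveI : Fact (1 < M) := ⟨by omega⟩
  have hMval : ∀ z : ZMod M, z.val < M := fun z => ZMod.val_lt z
  set c : ZMod M → Fin n := fun z =>
    if z = 0 then f none
    else f (some ⟨i, ⟨z.val - 1, by have := ZMod.val_lt z; omega⟩⟩) with hc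
  have hvz : ∀ z : ZMod M, z.val = 0 ↔ z = 0 := fun z => ZMod.val_eq_zero z
  have hadd : ∀ z : ZMod M, (z + 1).val = (z.val + 1) % M := by
    intro z; rw [ZMod.val_add, ZMod.val_one]
  -- injectivity of c
  have cinj : Function.Injective c := by
    intro z z' h
    by_cases hz : z = 0 <;> by_cases hz' : z' = 0
    · rw [hz, hz']
    · rw [hc] at h; simp only [if_pos hz, if_neg hz'] at h
      exact absurd (f.injective h) (by simp)
    · rw [hc] at h; simp only [if_neg hz, if_pos hz'] at h
      exact absurd (f.injective h) (by simp)
    · rw [hc] at h; simp only [if_neg hz, if_neg hz'] at h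
      have h2 := f.injective h
      have h3 := Option.some_injective _ h2
      have h4 : z.val - 1 = z'.val - 1 := by
        simpa using congrArg (fun s : (Σ i : Fin t, Fin (2 * k i - 1)) => (s.2 : ℕ)) h3
      have hz1 : 1 ≤ z.val := by
        rcases Nat.eq_zero_or_pos z.val with h | h
        · exact absurd ((hvz z).mp h) hz
        · exact h
      have hz1' : 1 ≤ z'.val := by
        rcases Nat.eq_zero_or_pos z'.val with h | h
        · exact absurd ((hvz z').mp h) hz'
        · exact h
      exact ZMod.val_injective M (by omega)
  -- adjacency along the cycle
  have cadj : ∀ z : ZMod M, (Splus n κ).Adj (c z) (c (z + 1)) := by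
    intro z
    by_cases hz : z = 0 <;> by_cases hz1 : z + 1 = 0
    · exfalso
      rw [hz, zero_add] at hz1
      have := ZMod.val_one M
      rw [hz1] at this
      simp at this
    · have hv1 : (z + 1).val = 1 := by rw [hz, zero_add, ZMod.val_one]
      rw [hc]
      simp only [if_pos hz, if_neg hz1]
      exact hf _ _ (ic_adj_none (Or.inl (by simp [hv1])))
    · have hv : z.val = M - 1 := by
        have := hadd z
        rw [hz1] at this
        simp only [ZMod.val_zero] at this
        have h2 := hMval z
        have : z.val + 1 = M := by
          rcases Nat.lt_or_ge (z.val + 1) M with h | h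
          · rw [Nat.mod_eq_of_lt h] at this; omega
          · omega
        omega
      rw [hc]
      simp only [if_neg hz, if_pos hz1]
      exact (hf _ _ (ic_adj_none (Or.inr (by simp [hv]; omega)))).symm
    · have hz0 : 1 ≤ z.val := by
        rcases Nat.eq_zero_or_pos z.val with h | h
        · exact absurd ((hvz z).mp h) hz
        · exact h
      have hv : (z + 1).val = z.val + 1 := by
        have := hadd z
        have h2 := hMval z
        have h3 : z.val + 1 ≠ M := by
          intro h4
          rw [h4] at this
          simp at this
          exact hz1 this
        rw [Nat.mod_eq_of_lt (by omega)] at this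
        exact this
      rw [hc]
      simp only [if_neg hz, if_neg hz1]
      refine hf _ _ (ic_adj_some ?_)
      simp [hv]
      omega
  -- counting
  set S : Finset (ZMod M) := Finset.univ.filter (fun z => κ ≤ ((c z : Fin n) : ℕ)) with hS
  set T : Finset (ZMod M) := Finset.univ.filter (fun z => κ ≤ ((c (z + 1) : Fin n) : ℕ)) with hT
  have hTS : T = S.image (fun z => z - 1) := by
    ext w
    simp only [hS, hT, Finset.mem_image, Finset.mem_filter, Finset.mem_univ, true_and]
    constructor
    · intro h
      exact ⟨w + 1, h, by ring⟩
    · rintro ⟨z, hz, rfl⟩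
      rw [sub_add_cancel]
      exact hz
  have hTcard : T.card = S.card := by
    rw [hTS]
    exact Finset.card_image_of_injective _ (fun x y h => by
      have := congrArg (· + 1) h; simpa using this)
  have hpair : ∀ z : ZMod M, κ ≤ ((c z : Fin n) : ℕ) → κ ≤ ((c (z + 1) : Fin n) : ℕ) →
      (((c z : Fin n) : ℕ) = κ ∧ ((c (z + 1) : Fin n) : ℕ) = κ + 1) ∨
      (((c (z + 1) : Fin n) : ℕ) = κ ∧ ((c z : Fin n) : ℕ) = κ + 1) := by
    intro z h1 h2
    have := splus_adj_iff.mp (cadj z)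
    omega
  have htwo : ((2 : ℕ) : ZMod M) ≠ 0 := by
    intro h
    have := (ZMod.natCast_eq_zero_iff _ _).mp h
    have := Nat.le_of_dvd (by omega) this
    omega
  have hST1 : (S ∩ T).card ≤ 1 := by
    rw [Finset.card_le_one]
    intro z hz z' hz'
    simp only [hS, hT, Finset.mem_inter, Finset.mem_filter, Finset.mem_univ, true_and] at hz hz'
    obtain ⟨hz1, hz2⟩ := hz
    obtain ⟨hz1', hz2'⟩ := hz'
    have hp := hpair z hz1 hz2
    have hp' := hpair z' hz1' hz2'
    have heq : ∀ w w' : ZMod M, ((c w : Fin n) : ℕ) = ((c w' : Fin n) : ℕ) → w = w' :=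
      fun w w' h => cinj (Fin.ext h)
    rcases hp with ⟨ha, hb⟩ | ⟨ha, hb⟩ <;> rcases hp' with ⟨ha', hb'⟩ | ⟨ha', hb'⟩
    · exact heq _ _ (by omega)
    · exfalso
      have e1 : z = z' + 1 := heq _ _ (by omega)
      have e2 : z' = z + 1 := heq _ _ (by omega)
      rw [e2] at e1
      have : ((2 : ℕ) : ZMod M) = 0 := by
        have h3 : z + 0 = z + (1 + 1) := by rw [add_zero, ← add_assoc]; exact e1
        have h2 := add_left_cancel h3
        push_cast
        rw [show ((2 : ZMod M)) = 1 + 1 by norm_num]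
        exact h2.symm
      exact htwo this
    · exfalso
      have e1 : z' = z + 1 := heq _ _ (by omega)
      have e2 : z = z' + 1 := heq _ _ (by omega)
      rw [e1] at e2
      have : ((2 : ℕ) : ZMod M) = 0 := by
        have h3 : z + 0 = z + (1 + 1) := by rw [add_zero, ← add_assoc]; exact e2
        have h2 := add_left_cancel h3
        push_cast
        rw [show ((2 : ZMod M)) = 1 + 1 by norm_num]
        exact h2.symm
      exact htwo this
    · exact heq _ _ (by omega)
  have hMcard : (Finset.univ : Finset (ZMod M)).card = M := by
    rw [Finset.card_univ, ZMod.card]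
  have hun : (S ∪ T).card ≤ M :=
    le_trans (Finset.card_le_card (Finset.subset_univ _)) (le_of_eq hMcard)
  have hie := Finset.card_inter_add_card_union S T
  have hScard : S.card ≤ K := by omega
  set Hf : Finset (ZMod M) := Finset.univ.filter (fun z => ¬ κ ≤ ((c z : Fin n) : ℕ)) with hHf
  have hsplit : S.card + Hf.card = M := by
    rw [hS, hHf, Finset.card_filter_add_card_filter_not, hMcard]
  refine ⟨Hf.image c, ?_, ?_, ?_⟩
  · rw [Finset.card_image_of_injOn cinj.injOn]
    omega
  · intro v hv
    obtain ⟨z, hz, rfl⟩ := Finset.mem_image.mp hv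
    simp only [hHf, Finset.mem_filter] at hz
    omega
  · intro v hv
    obtain ⟨z, hz, rfl⟩ := Finset.mem_image.mp hv
    by_cases hz0 : z = 0
    · left; simp only [hc, if_pos hz0]
    · right
      refine ⟨⟨z.val - 1, by have := ZMod.val_lt z; omega⟩, ?_⟩
      simp only [hc, if_neg hz0]

lemma no_copy {t : ℕ} (ht : 1 ≤ t) {k : Fin t → ℕ} (hk : ∀ i, 3 ≤ k i)
    {κ : ℕ} (hκ : κ = ∑ i, (k i - 1)) {n : ℕ} (hn : κ + 2 ≤ n) :
    ¬ ContainsCopy (interCycles t k) (Splus n κ) := by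
  classical
  rintro ⟨f, hf⟩
  choose V hVcard hVhub hVmem using fun i => cycle_hubs hn f hf i (hk i)
  set W : Fin t → Finset (Fin n) := fun i => (V i).erase (f none) with hW
  have hWdisj : ∀ i ∈ Finset.univ, ∀ j ∈ Finset.univ, i ≠ j → Disjoint (W i) (W j) := by
    intro i _ j _ hij
    rw [Finset.disjoint_left]
    intro v hvi hvj
    have hvi' := Finset.mem_of_mem_erase hvi
    have hvj' := Finset.mem_of_mem_erase hvj
    have hni : v ≠ f none := Finset.ne_of_mem_erase hvi
    rcases hVmem i v hvi' with h | ⟨ji, hji⟩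
    · exact hni h
    rcases hVmem j v hvj' with h | ⟨jj, hjj⟩
    · exact hni h
    rw [hji] at hjj
    have := Option.some_injective _ (f.injective hjj)
    exact hij (congrArg Sigma.fst this)
  have hWcard : ∀ i, k i - 1 ≤ (W i).card := by
    intro i
    have h1 := Finset.pred_card_le_card_erase (s := V i) (a := f none)
    have := hVcard i
    simp only [hW]
    omega
  have hsum : ∑ i, (W i).card = (Finset.univ.biUnion W).card :=
    (Finset.card_biUnion hWdisj).symm
  have hhubcard : (Finset.univ.filter (fun v : Fin n => (v:ℕ) < κ)).card = κ :=
    hub_card (by omega)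
  set i0 : Fin t := ⟨0, ht⟩
  have hκpos : 2 ≤ κ := by
    rw [hκ]
    calc 2 ≤ k i0 - 1 := by have := hk i0; omega
    _ ≤ ∑ i, (k i - 1) :=
      Finset.single_le_sum (f := fun i => k i - 1) (fun i _ => Nat.zero_le _)
        (Finset.mem_univ i0)
  by_cases hmem : f none ∈ V i0
  · have hfhub : ((f none : Fin n) : ℕ) < κ := hVhub i0 _ hmem
    have hsub2 : Finset.univ.biUnion W ⊆
        (Finset.univ.filter (fun v : Fin n => (v:ℕ) < κ)).erase (f none) := by
      intro v hv
      obtain ⟨i, _, hvW⟩ := Finset.mem_biUnion.mp hv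
      exact Finset.mem_erase.mpr ⟨Finset.ne_of_mem_erase hvW,
        Finset.mem_filter.mpr ⟨Finset.mem_univ _, hVhub i _ (Finset.mem_of_mem_erase hvW)⟩⟩
    have hc2 : (Finset.univ.biUnion W).card ≤ κ - 1 := by
      calc (Finset.univ.biUnion W).card
          ≤ ((Finset.univ.filter (fun v : Fin n => (v:ℕ) < κ)).erase (f none)).card :=
            Finset.card_le_card hsub2
        _ = κ - 1 := by
            have hfm : f none ∈ Finset.univ.filter (fun v : Fin n => (v:ℕ) < κ) :=
              Finset.mem_filter.mpr ⟨Finset.mem_univ _, hfhub⟩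
            rw [Finset.card_erase_of_mem hfm, hhubcard]
    have hge : κ ≤ ∑ i, (W i).card := by
      rw [hκ]
      exact Finset.sum_le_sum (fun i _ => hWcard i)
    omega
  · have hW0 : W i0 = V i0 := Finset.erase_eq_of_notMem hmem
    have hlt : ∑ i, (k i - 1) < ∑ i, (W i).card := by
      refine Finset.sum_lt_sum (fun i _ => hWcard i) ⟨i0, Finset.mem_univ _, ?_⟩
      rw [hW0]
      have := hVcard i0
      have := hk i0
      omega
    have hsub : Finset.univ.biUnion W ⊆
        Finset.univ.filter (fun v : Fin n => (v:ℕ) < κ) := by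
      intro v hv
      obtain ⟨i, _, hvW⟩ := Finset.mem_biUnion.mp hv
      exact Finset.mem_filter.mpr ⟨Finset.mem_univ _, hVhub i _ (Finset.mem_of_mem_erase hvW)⟩
    have := Finset.card_le_card hsub
    omega

/-- for `k i ≥ 3` and `κ = ∑ (k i - 1)`, the graph `S_{n,κ}⁺`
contains no copy of `C_{2k₁,…,2k_t}`; moreover every minor of `S_{n,κ}⁺` is
isomorphic to a subgraph of it, so `S_{n,κ}⁺` is `C_{2k₁,…,2k_t}`-minor-free. -/
theorem stmt13 (t : ℕ) (ht : 1 ≤ t) (k : Fin t → ℕ) (hk : ∀ i, 3 ≤ k i)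
    (κ : ℕ) (hκ : κ = ∑ i, (k i - 1)) (n : ℕ) (hn : κ + 2 ≤ n) :
    ¬ ContainsCopy (interCycles t k) (Splus n κ) ∧
    (∀ (α : Type) (H : SimpleGraph α),
      IsMinorOf H (Splus n κ) → ContainsCopy H (Splus n κ)) ∧
    ¬ IsMinorOf (interCycles t k) (Splus n κ) := by
  refine ⟨no_copy ht hk hκ hn, fun α H hm => minor_to_copy hm,
    fun hm => no_copy ht hk hκ hn (minor_to_copy hm)⟩
end

section
/- Let F_{n,t} = K_t ∨ M_{n-t}, where M_{n-t} is a maximal matching on n-t vertices (⌊(n-t)/2⌋ disjoint edges plus possibly one isolated vertex). Then F_{n,t} contains no subgraph isomorphic to C_{4,...,4}, the graph of t four-cycles intersecting in a single vertex. -/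
/-- `F_{n,t} = K_t ∨ M_{n-t}`: the first `t` vertices are adjacent to
everything; on the remaining `n - t` vertices there is a maximal matching,
pairing `t+2i` with `t+2i+1`. -/
def Fnt (n t : ℕ) : SimpleGraph (Fin n) :=
  SimpleGraph.fromRel (fun a b =>
    (a : ℕ) < t ∨ (b : ℕ) < t ∨
      (t ≤ (a : ℕ) ∧ ((a : ℕ) - t) % 2 = 0 ∧ (b : ℕ) = (a : ℕ) + 1))


private lemma fnt_matching {n t : ℕ} {u v w : Fin n} (hu : t ≤ (u:ℕ)) (hv : t ≤ (v:ℕ))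
    (hw : t ≤ (w:ℕ)) (h1 : (Fnt n t).Adj u v) (h2 : (Fnt n t).Adj u w) : v = w := by
  rw [Fnt, SimpleGraph.fromRel_adj] at h1 h2
  obtain ⟨-, h1⟩ := h1
  obtain ⟨-, h2⟩ := h2
  apply Fin.ext
  omega

private def cyc {t : ℕ} (i : Fin t) (j : Fin 3) :
    Option (Σ i : Fin t, Fin (2 * (fun _ : Fin t => 2) i - 1)) := some ⟨i, j⟩

private lemma icyc_adj1 {t : ℕ} (i : Fin t) :
    (interCycles t (fun _ => 2)).Adj none (cyc i 0) := by
  rw [interCycles, SimpleGraph.fromRel_adj]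
  exact ⟨by simp [cyc], Or.inl (Or.inl rfl)⟩

private lemma icyc_adj2 {t : ℕ} (i : Fin t) :
    (interCycles t (fun _ => 2)).Adj none (cyc i 2) := by
  rw [interCycles, SimpleGraph.fromRel_adj]
  exact ⟨by simp [cyc], Or.inl (Or.inr rfl)⟩

private lemma icyc_adj01 {t : ℕ} (i : Fin t) :
    (interCycles t (fun _ => 2)).Adj (cyc i 0) (cyc i 1) := by
  rw [interCycles, SimpleGraph.fromRel_adj]
  exact ⟨by simp [cyc], Or.inl ⟨rfl, rfl⟩⟩

private lemma icyc_adj12 {t : ℕ} (i : Fin t) :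
    (interCycles t (fun _ => 2)).Adj (cyc i 1) (cyc i 2) := by
  rw [interCycles, SimpleGraph.fromRel_adj]
  exact ⟨by simp [cyc], Or.inl ⟨rfl, rfl⟩⟩

/-- `F_{n,t}` contains no copy of `C_{4,…,4}`, the graph of
`t` four-cycles intersecting in a single vertex. -/
theorem stmt14 (n t : ℕ) (ht : 1 ≤ t) :
    ¬ ContainsCopy (interCycles t (fun _ => 2)) (Fnt n t) := by
  classical
  rintro ⟨f, hf⟩
  set T : Fin t → Finset (Fin 3) :=
    fun i => Finset.univ.filter (fun j => (f (cyc i j) : Fin n).val < t) with hT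
  have hTmem : ∀ (i : Fin t) (j : Fin 3), j ∈ T i ↔ (f (cyc i j)).val < t := by
    intro i j; simp [hT]
  set S : Finset ((i : Fin t) × Fin 3) := Finset.univ.sigma T with hS
  have hcard : S.card = ∑ i : Fin t, (T i).card := Finset.card_sigma _ _
  have hinj : ∀ p q : (i : Fin t) × Fin 3,
      (f (cyc p.1 p.2)).val = (f (cyc q.1 q.2)).val → p = q := by
    intro p q h
    have h2 : cyc p.1 p.2 = cyc q.1 q.2 := f.injective (Fin.ext h)
    simpa [cyc, Sigma.ext_iff] using h2
  have hSmem : ∀ p ∈ S, (f (cyc p.1 p.2)).val < t := by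
    intro p hp
    rw [hS, Finset.mem_sigma] at hp
    exact (hTmem p.1 p.2).mp hp.2
  -- adjacency images
  have hza : ∀ i, (Fnt n t).Adj (f none) (f (cyc i 0)) := fun i => hf _ _ (icyc_adj1 i)
  have hzc : ∀ i, (Fnt n t).Adj (f none) (f (cyc i 2)) := fun i => hf _ _ (icyc_adj2 i)
  have hab : ∀ i, (Fnt n t).Adj (f (cyc i 0)) (f (cyc i 1)) := fun i => hf _ _ (icyc_adj01 i)
  have hbc : ∀ i, (Fnt n t).Adj (f (cyc i 1)) (f (cyc i 2)) := fun i => hf _ _ (icyc_adj12 i)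
  have hnz : ∀ i (j : Fin 3), f none ≠ f (cyc i j) := by
    intro i j h
    exact absurd (f.injective h) (by simp [cyc])
  have hac : ∀ i, f (cyc i 0) ≠ f (cyc i 2) := by
    intro i h
    have := f.injective h
    simp [cyc, Sigma.ext_iff] at this
  by_cases hz : t ≤ (f none).val
  · -- the hub is in the matching part: each cycle needs two clique vertices
    have hlow : ∀ i : Fin t, 2 ≤ (T i).card := by
      intro i
      have p01 : (f (cyc i 0)).val < t ∨ (f (cyc i 1)).val < t := by
        by_contra h
        push_neg at h
        exact hnz i 1 (fnt_matching h.1 hz h.2 (hza i).symm (hab i))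
      have p12 : (f (cyc i 1)).val < t ∨ (f (cyc i 2)).val < t := by
        by_contra h
        push_neg at h
        exact hnz i 1 (fnt_matching h.2 h.1 hz (hbc i).symm (hzc i).symm).symm
      have p02 : (f (cyc i 0)).val < t ∨ (f (cyc i 2)).val < t := by
        by_contra h
        push_neg at h
        exact hac i (fnt_matching hz h.1 h.2 (hza i) (hzc i))
      refine Finset.one_lt_card.mpr ?_
      rcases p01 with h | h
      · rcases p12 with h' | h'
        · exact ⟨0, (hTmem i 0).mpr h, 1, (hTmem i 1).mpr h', by decide⟩
        · exact ⟨0, (hTmem i 0).mpr h, 2, (hTmem i 2).mpr h', by decide⟩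
      · rcases p02 with h' | h'
        · exact ⟨0, (hTmem i 0).mpr h', 1, (hTmem i 1).mpr h, by decide⟩
        · exact ⟨1, (hTmem i 1).mpr h, 2, (hTmem i 2).mpr h', by decide⟩
    have hup : S.card ≤ (Finset.range t).card := by
      refine Finset.card_le_card_of_injOn (fun p => (f (cyc p.1 p.2)).val) ?_ ?_
      · intro p hp
        exact Finset.mem_range.mpr (hSmem p hp)
      · intro p _ q _ h
        exact hinj p q h
    have hsum : t * 2 ≤ ∑ i : Fin t, (T i).card := by
      calc t * 2 = ∑ _i : Fin t, 2 := by simp [Finset.sum_const, mul_comm]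
        _ ≤ ∑ i : Fin t, (T i).card := Finset.sum_le_sum fun i _ => hlow i
    rw [Finset.card_range] at hup
    omega
  · -- the hub is a clique vertex: each cycle needs one more clique vertex
    push_neg at hz
    have hlow : ∀ i : Fin t, 1 ≤ (T i).card := by
      intro i
      have p : (f (cyc i 0)).val < t ∨ (f (cyc i 1)).val < t ∨ (f (cyc i 2)).val < t := by
        by_contra h
        push_neg at h
        exact hac i (fnt_matching h.2.1 h.1 h.2.2 (hab i).symm (hbc i))
      refine Finset.card_pos.mpr ?_
      rcases p with h | h | h
      · exact ⟨0, (hTmem i 0).mpr h⟩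
      · exact ⟨1, (hTmem i 1).mpr h⟩
      · exact ⟨2, (hTmem i 2).mpr h⟩
    have hup : S.card ≤ ((Finset.range t).erase (f none).val).card := by
      refine Finset.card_le_card_of_injOn (fun p => (f (cyc p.1 p.2)).val) ?_ ?_
      · intro p hp
        refine Finset.mem_erase.mpr ⟨?_, Finset.mem_range.mpr (hSmem p hp)⟩
        intro h
        exact hnz p.1 p.2 (Fin.ext h.symm)
      · intro p _ q _ h
        exact hinj p q h
    rw [Finset.card_erase_of_mem (Finset.mem_range.mpr hz), Finset.card_range] at hup
    have hsum : t * 1 ≤ ∑ i : Fin t, (T i).card := by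
      calc t * 1 = ∑ _i : Fin t, 1 := by simp
        _ ≤ ∑ i : Fin t, (T i).card := Finset.sum_le_sum fun i _ => hlow i
    omega
end
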